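/- Let x = Σ_{n=1}^∞ 2^{-a_n} where a_n = 4^n. Then the Takagi function T does not have a (two-sided) derivative at x, even in the extended sense of an improper infinite derivative: the difference quotients (T(y)-T(z))/(y-z) over nested intervals [z,y] containing x do not tend to a common limit in the extended reals. -/

import Mathlib

open Filter Topology Set

noncomputable def tent (x : ℝ) : ℝ := min (2*x) (2-2*x)

noncomputable def takagi (x : ℝ) : ℝ := ∑' n : ℕ, tent^[n+1] x / 2^(n+1)

lemma tent_mem {x : ℝ} (hx : x ∈ Icc (0:ℝ) 1) : tent x ∈ Icc (0:ℝ) 1 := by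
  obtain ⟨h0, h1⟩ := hx
  refine ⟨le_min (by linarith) (by linarith), ?_⟩
  rcases le_total x (1/2) with h | h
  · exact le_trans (min_le_left _ _) (by linarith)
  · exact le_trans (min_le_right _ _) (by linarith)

lemma tent_iter_mem {x : ℝ} (hx : x ∈ Icc (0:ℝ) 1) (k : ℕ) : tent^[k] x ∈ Icc (0:ℝ) 1 := by
  induction k with
  | zero => exact hx
  | succ k ih => rw [Function.iterate_succ_apply']; exact tent_mem ih

lemma two_pow_succ_eq (n : ℕ) : (1:ℝ)/2/2^n = 1/2^(n+1) := by
  rw [div_div, ← pow_succ']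

lemma takagi_term_le {x : ℝ} (hx : x ∈ Icc (0:ℝ) 1) (n : ℕ) :
    tent^[n+1] x / 2^(n+1) ≤ (1:ℝ)/2/2^n := by
  rw [two_pow_succ_eq]
  have := (tent_iter_mem hx (n+1)).2
  gcongr

lemma takagi_term_nonneg {x : ℝ} (hx : x ∈ Icc (0:ℝ) 1) (n : ℕ) :
    0 ≤ tent^[n+1] x / 2^(n+1) := by
  have := (tent_iter_mem hx (n+1)).1
  positivity

lemma takagi_summable {x : ℝ} (hx : x ∈ Icc (0:ℝ) 1) :
    Summable (fun n : ℕ => tent^[n+1] x / 2^(n+1)) :=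
  Summable.of_nonneg_of_le (takagi_term_nonneg hx) (takagi_term_le hx)
    (summable_geometric_two' 1)

lemma takagi_nonneg {x : ℝ} (hx : x ∈ Icc (0:ℝ) 1) : 0 ≤ takagi x :=
  tsum_nonneg (takagi_term_nonneg hx)

lemma takagi_le_one {x : ℝ} (hx : x ∈ Icc (0:ℝ) 1) : takagi x ≤ 1 := by
  calc takagi x ≤ ∑' n : ℕ, (1:ℝ)/2/2^n :=
        Summable.tsum_le_tsum (takagi_term_le hx) (takagi_summable hx) (summable_geometric_two' 1)
    _ = 1 := tsum_geometric_two' 1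

lemma tent_iter_one (k : ℕ) : tent^[k+1] (1:ℝ) = 0 := by
  induction k with
  | zero => norm_num [tent]
  | succ k ih =>
      rw [Function.iterate_succ_apply', ih]; norm_num [tent]

lemma takagi_one : takagi 1 = 0 := by
  unfold takagi
  simp [tent_iter_one]

lemma tent_iter_zero (k : ℕ) : tent^[k+1] (0:ℝ) = 0 := by
  induction k with
  | zero => norm_num [tent]
  | succ k ih =>
      rw [Function.iterate_succ_apply', ih]; norm_num [tent]

lemma takagi_zero : takagi 0 = 0 := by
  unfold takagi
  simp [tent_iter_zero]

lemma takagi_rec {x : ℝ} (hx : x ∈ Icc (0:ℝ) 1) :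
    takagi x = tent x / 2 + takagi (tent x) / 2 := by
  have hs := takagi_summable hx
  have h0 := Summable.tsum_eq_zero_add hs
  unfold takagi
  rw [h0]
  congr 1
  · norm_num
  · have : ∀ n : ℕ, tent^[n+1+1] x / 2^(n+1+1) = (tent^[n+1] (tent x) / 2^(n+1)) / 2 := by
      intro n
      rw [Function.iterate_succ_apply]
      ring
    rw [tsum_congr this, tsum_div_const]


lemma tent_symm (x : ℝ) : tent (1 - x) = tent x := by
  unfold tent
  rw [min_comm]
  ring_nf

lemma takagi_symm {x : ℝ} : takagi (1 - x) = takagi x := by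
  unfold takagi
  refine tsum_congr fun n => ?_
  rw [Function.iterate_succ_apply, Function.iterate_succ_apply, tent_symm]

lemma takagi_left {x : ℝ} (h0 : 0 ≤ x) (h1 : x ≤ 1/2) :
    takagi x = x + takagi (2*x) / 2 := by
  have ht : tent x = 2*x := min_eq_left (by linarith)
  rw [takagi_rec ⟨h0, by linarith⟩, ht]
  ring

lemma takagi_right {x : ℝ} (h0 : 1/2 ≤ x) (h1 : x ≤ 1) :
    takagi x = (1-x) + takagi (2*x-1) / 2 := by
  have ht : tent x = 2-2*x := min_eq_right (by linarith)
  rw [takagi_rec ⟨by linarith, h1⟩, ht]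
  have : (2:ℝ)-2*x = 1 - (2*x-1) := by ring
  rw [this, takagi_symm]
  ring

lemma takagi_pow_half (j : ℕ) : takagi ((1/2)^j) = j * (1/2)^j := by
  induction j with
  | zero => simpa using takagi_one
  | succ j ih =>
      have h1 : ((1:ℝ)/2)^(j+1) ≤ 1/2 := by
        calc ((1:ℝ)/2)^(j+1) ≤ (1/2)^1 := by
              apply pow_le_pow_of_le_one <;> norm_num
          _ = 1/2 := by norm_num
      rw [takagi_left (by positivity) h1]
      have h2 : 2 * ((1:ℝ)/2)^(j+1) = (1/2)^j := by
        rw [pow_succ]; ring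
      rw [h2, ih]
      push_cast
      ring

lemma takagi_small_le {j : ℕ} {u : ℝ} (h0 : 0 ≤ u) (h1 : u ≤ (1/2)^j) :
    takagi u ≤ (j+1) * (1/2)^j := by
  induction j generalizing u with
  | zero =>
      simpa using takagi_le_one ⟨h0, by simpa using h1⟩
  | succ j ih =>
      have hu2 : u ≤ 1/2 := h1.trans (by
        calc ((1:ℝ)/2)^(j+1) ≤ (1/2)^1 := by
              apply pow_le_pow_of_le_one <;> norm_num
          _ = 1/2 := by norm_num)
      rw [takagi_left h0 hu2]
      have h2u : 2*u ≤ (1/2)^j := by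
        rw [pow_succ] at h1; linarith
      have := ih (by linarith) h2u
      have hb : u ≤ (1/2)^(j+1) := h1
      push_cast
      rw [pow_succ]
      nlinarith [pow_pos (by norm_num : (0:ℝ) < 1/2) j]


noncomputable def bval : List Bool → ℝ
  | [] => 0
  | b :: L => (if b then 1 else 0)/2 + bval L / 2

noncomputable def bslope : List Bool → ℝ
  | [] => 0
  | b :: L => (if b then -1 else 1) + bslope L

lemma bval_append (L L' : List Bool) :
    bval (L ++ L') = bval L + (1/2)^L.length * bval L' := by
  induction L with
  | nil => simp [bval]
  | cons b L ih =>
      simp only [List.cons_append, bval, List.length_cons, pow_succ, List.append_eq, ih]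
      ring

lemma bslope_append (L L' : List Bool) :
    bslope (L ++ L') = bslope L + bslope L' := by
  induction L with
  | nil => simp [bslope]
  | cons b L ih => simp only [List.cons_append, bslope, List.append_eq, ih]; ring

lemma bval_replicate_false (k : ℕ) : bval (List.replicate k false) = 0 := by
  induction k with
  | zero => simp [bval]
  | succ k ih => simp [List.replicate_succ, bval, ih]

lemma bslope_replicate_false (k : ℕ) : bslope (List.replicate k false) = k := by
  induction k with
  | zero => simp [bslope]
  | succ k ih => simp [List.replicate_succ, bslope, ih]; ring

lemma bval_block (k : ℕ) :
    bval (List.replicate k false ++ [true]) = (1/2:ℝ)^(k+1) := by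
  rw [bval_append, bval_replicate_false, List.length_replicate]
  simp [bval, pow_succ]

lemma bslope_block (k : ℕ) :
    bslope (List.replicate k false ++ [true]) = (k:ℝ) - 1 := by
  rw [bslope_append, bslope_replicate_false]
  simp [bslope]
  ring

noncomputable def mlist : ℕ → List Bool
  | 0 => List.replicate 3 false ++ [true]
  | n+1 => mlist n ++ (List.replicate (4^(n+2) - 4^(n+1) - 1) false ++ [true])

noncomputable def llist : ℕ → List Bool
  | 0 => List.replicate 4 false
  | n+1 => mlist n ++ List.replicate (4^(n+2) - 4^(n+1)) false

lemma pow4_facts (n : ℕ) : 4^(n+2) = 4 * 4^(n+1) ∧ 1 ≤ 4^(n+1) :=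
  ⟨by ring, Nat.one_le_pow _ _ (by omega)⟩

lemma mlist_length (n : ℕ) : (mlist n).length = 4^(n+1) := by
  induction n with
  | zero => simp [mlist]
  | succ n ih =>
      obtain ⟨he4, h14⟩ := pow4_facts n
      rw [mlist, List.length_append, List.length_append, List.length_replicate,
        List.length_singleton, ih]
      omega

lemma llist_length (n : ℕ) : (llist n).length = 4^(n+1) := by
  cases n with
  | zero => simp [llist]
  | succ n =>
      obtain ⟨he4, h14⟩ := pow4_facts n
      rw [llist, List.length_append, List.length_replicate, mlist_length]
      omega

lemma bval_mlist_succ (n : ℕ) :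
    bval (mlist (n+1)) = bval (mlist n) + (1/2:ℝ)^(4^(n+2)) := by
  obtain ⟨he4, h14⟩ := pow4_facts n
  rw [mlist, bval_append, bval_block, mlist_length, ← pow_add]
  congr 2
  omega

lemma bval_mlist (n : ℕ) :
    bval (mlist n) = ∑ m ∈ Finset.range (n+1), (1/2:ℝ)^(4^(m+1)) := by
  induction n with
  | zero =>
      rw [mlist, bval_block]
      norm_num
  | succ n ih =>
      rw [bval_mlist_succ, ih, Finset.sum_range_succ _ (n+1)]

lemma bslope_mlist (n : ℕ) :
    bslope (mlist n) = (4:ℝ)^(n+1) - 2*(n+1) := by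
  induction n with
  | zero => rw [mlist, bslope_block]; norm_num
  | succ n ih =>
      obtain ⟨he4, h14⟩ := pow4_facts n
      rw [mlist, bslope_append, bslope_block, ih,
        Nat.cast_sub (by omega), Nat.cast_sub (by omega)]
      push_cast
      ring

lemma bval_llist (n : ℕ) :
    bval (llist n) = bval (mlist n) - (1/2:ℝ)^(4^(n+1)) := by
  cases n with
  | zero =>
      rw [llist, bval_replicate_false, mlist, bval_block]
      norm_num
  | succ n =>
      rw [llist, bval_append, bval_replicate_false, bval_mlist_succ, mlist_length]
      ring

lemma bslope_llist (n : ℕ) :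
    bslope (llist n) = (4:ℝ)^(n+1) - 2*n := by
  cases n with
  | zero => rw [llist, bslope_replicate_false]; norm_num
  | succ n =>
      obtain ⟨he4, h14⟩ := pow4_facts n
      rw [llist, bslope_append, bslope_replicate_false, bslope_mlist,
        Nat.cast_sub (by omega)]
      push_cast
      ring


lemma dval_nonneg (L : List Bool) : 0 ≤ bval L := by
  induction L with
  | nil => simp [bval]
  | cons b L ih => simp only [bval]; split <;> linarith

lemma dval_le (L : List Bool) : bval L ≤ 1 - (1/2)^L.length := by
  induction L with
  | nil => simp [bval]
  | cons b L ih =>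
      simp only [bval, List.length_cons, pow_succ]
      split <;> nlinarith [pow_pos (by norm_num : (0:ℝ) < 1/2) L.length]

lemma takagi_affine (L : List Bool) (t : ℝ) (h0 : 0 ≤ t) (h1 : t ≤ (1/2)^L.length) :
    takagi (bval L + t) =
      takagi (bval L) + bslope L * t + (1/2)^L.length * takagi (2^L.length * t) := by
  induction L generalizing t with
  | nil =>
      simp [bval, bslope, takagi_zero]
  | cons b L ih =>
      have hlen := dval_le L
      have hnn := dval_nonneg L
      have hp : (0:ℝ) < (1/2)^L.length := by positivity
      have hlc : ((1:ℝ)/2)^(b :: L).length = (1/2)^L.length / 2 := by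
        simp [pow_succ]; ring
      rw [hlc] at h1
      have h2t : 2*t ≤ (1/2)^L.length := by linarith
      cases b with
      | false =>
          have hval : bval (false :: L) = bval L / 2 := by simp [bval]
          have hsl : bslope (false :: L) = 1 + bslope L := by simp [bslope]
          have hmem : bval L / 2 + t ≤ 1/2 := by nlinarith
          have hA : takagi (bval L / 2) = bval L / 2 + takagi (bval L) / 2 := by
            have := takagi_left (x := bval L / 2) (by linarith) (by linarith)
            have e2 : 2 * (bval L / 2) = bval L := by ring
            rwa [e2] at this
          rw [hval, hsl]
          rw [takagi_left (by linarith) hmem]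
          have e1 : 2 * (bval L / 2 + t) = bval L + 2*t := by ring
          rw [e1, ih (2*t) (by linarith) h2t, hA]
          have e3 : (2:ℝ)^L.length * (2*t) = 2^(L.length+1) * t := by ring
          rw [e3]
          simp only [List.length_cons, pow_succ]
          ring
      | true =>
          have hval : bval (true :: L) = 1/2 + bval L / 2 := by simp [bval]
          have hsl : bslope (true :: L) = -1 + bslope L := by simp [bslope]
          have hmem1 : (1:ℝ)/2 ≤ 1/2 + bval L / 2 + t := by linarith
          have hmem2 : 1/2 + bval L / 2 + t ≤ 1 := by nlinarith
          have hA : takagi (1/2 + bval L / 2) = 1 - (1/2 + bval L / 2) + takagi (bval L) / 2 := by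
            have := takagi_right (x := 1/2 + bval L / 2) (by linarith) (by linarith)
            have e2 : 2 * (1/2 + bval L / 2) - 1 = bval L := by ring
            rwa [e2] at this
          rw [hval, hsl]
          rw [takagi_right hmem1 hmem2]
          have e1 : 2 * (1/2 + bval L / 2 + t) - 1 = bval L + 2*t := by ring
          rw [e1, ih (2*t) (by linarith) h2t, hA]
          have e3 : (2:ℝ)^L.length * (2*t) = 2^(L.length+1) * t := by ring
          rw [e3]
          simp only [List.length_cons, pow_succ]
          ring

lemma takagi_dyadic_step (L : List Bool) :
    takagi (bval L + (1/2)^L.length) = takagi (bval L) + bslope L * (1/2)^L.length := by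
  have h := takagi_affine L ((1/2)^L.length) (by positivity) le_rfl
  have e : (2:ℝ)^L.length * (1/2)^L.length = 1 := by
    rw [← mul_pow]; norm_num
  rw [e, takagi_one] at h
  linarith [h]

lemma takagi_affine_left (L : List Bool) (t : ℝ) (h0 : 0 ≤ t) (h1 : t ≤ (1/2)^L.length) :
    takagi (bval L + (1/2)^L.length - t) =
      takagi (bval L + (1/2)^L.length) - bslope L * t
        + (1/2)^L.length * takagi (2^L.length * t) := by
  have h := takagi_affine L ((1/2)^L.length - t) (by linarith) (by linarith)
  have e : (2:ℝ)^L.length * ((1/2)^L.length - t) = 1 - 2^L.length * t := by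
    have : (2:ℝ)^L.length * (1/2)^L.length = 1 := by rw [← mul_pow]; norm_num
    ring_nf
    nlinarith [this]
  rw [e, takagi_symm] at h
  have hd := takagi_dyadic_step L
  have e2 : bval L + (1/2)^L.length - t = bval L + ((1/2)^L.length - t) := by ring
  rw [e2, h, hd]
  ring


lemma nat_fact1 (n : ℕ) : 3*n + 4 ≤ 4^(n+1) := by
  induction n with
  | zero => norm_num
  | succ n ih =>
      have e : (4:ℕ)^(n+2) = 4*4^(n+1) := by ring
      omega

lemma helper1 (a b : ℕ) : (2:ℝ)^a * (1/2)^(a+b) = (1/2)^b := by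
  rw [pow_add, ← mul_assoc, ← mul_pow]
  norm_num

lemma helper2 {a b : ℕ} (h : b ≤ a) : (1/2:ℝ)^a * 2^b = (1/2)^(a-b) := by
  have e : a = b + (a - b) := by omega
  calc (1/2:ℝ)^a * 2^b = 2^b * (1/2)^(b + (a-b)) := by rw [← e]; ring
    _ = (1/2)^(a-b) := helper1 b (a-b)

lemma half_pow_le {a b : ℕ} (h : a ≤ b) : (1/2:ℝ)^b ≤ (1/2)^a :=
  pow_le_pow_of_le_one (by norm_num) (by norm_num) h

lemma exp_ineq (n m : ℕ) : 4^(n+2) + m ≤ 4^(m+n+2) := by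
  have hm : m + 1 ≤ 4^m := Nat.lt_pow_self (n := m) (by norm_num)
  have h1 : 1 ≤ (4:ℕ)^(n+2) := Nat.one_le_pow _ _ (by omega)
  calc 4^(n+2) + m ≤ (m+1) * 4^(n+2) := by nlinarith
    _ ≤ 4^m * 4^(n+2) := Nat.mul_le_mul_right _ hm
    _ = 4^(m+n+2) := by rw [← pow_add]; congr 1
def KK (n : ℕ) : ℕ := 4^(n+1) + (4^(n+1) - 2*n)

/-- For `x = ∑ 2^{-4^n}`, the secant slopes over shrinking intervals containing `x`
do not tend to a common limit in the extended reals: `T` has no derivative at `x`,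
even in the improper infinite sense. -/
theorem takagi_no_improper_derivative_at_kruppel_point
    (x : ℝ) (hx : x = ∑' n : ℕ, (1/2 : ℝ)^(4^(n+1))) :
    ¬ ∃ L : EReal, ∀ z y : ℕ → ℝ,
      (∀ n, z n ≤ x) → (∀ n, x ≤ y n) → (∀ n, z n < y n) →
      Tendsto (fun n => y n - z n) atTop (𝓝 0) →
      Tendsto (fun n => (((takagi (y n) - takagi (z n)) / (y n - z n) : ℝ) : EReal))
        atTop (𝓝 L) := by
  rintro ⟨L, hL⟩
  -- summability of the defining series
  have hsum : Summable (fun m : ℕ => (1/2:ℝ)^(4^(m+1))) := by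
    apply Summable.of_nonneg_of_le (fun m => by positivity)
      (fun m => half_pow_le (by have := nat_fact1 m; omega)) summable_geometric_two
  -- the tails
  set r : ℕ → ℝ := fun n => ∑' m : ℕ, (1/2:ℝ)^(4^(m+n+2)) with hrdef
  have hA : ∀ n, x = bval (mlist n) + r n := by
    intro n
    rw [bval_mlist, hx, ← hsum.sum_add_tsum_nat_add (n+1)]
    congr 1
  have hr0 : ∀ n, 0 ≤ r n := fun n => tsum_nonneg (fun m => by positivity)
  have hrle : ∀ n, r n ≤ 2 * (1/2:ℝ)^(4^(n+2)) := by
    intro n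
    have hgs : Summable (fun m : ℕ => (1/2:ℝ)^(4^(n+2)) * (1/2)^m) :=
      summable_geometric_two.mul_left _
    have hcomp : ∀ m : ℕ, (1/2:ℝ)^(4^(m+n+2)) ≤ (1/2)^(4^(n+2)) * (1/2)^m := by
      intro m
      rw [← pow_add]
      exact half_pow_le (exp_ineq n m)
    calc r n ≤ ∑' m : ℕ, (1/2:ℝ)^(4^(n+2)) * (1/2)^m :=
          Summable.tsum_le_tsum hcomp (Summable.of_nonneg_of_le (fun m => by positivity) hcomp hgs) hgs
      _ = (1/2:ℝ)^(4^(n+2)) * 2 := by rw [tsum_mul_left, tsum_geometric_two]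
      _ = 2 * (1/2:ℝ)^(4^(n+2)) := by ring
  have hr2 : ∀ n, r n ≤ (1/2:ℝ)^(4^(n+1)) := by
    intro n
    obtain ⟨he4, h14⟩ := pow4_facts n
    calc r n ≤ 2*(1/2:ℝ)^(4^(n+2)) := hrle n
      _ ≤ 2*(1/2:ℝ)^(4^(n+1)+1) := by
          have := half_pow_le (show 4^(n+1)+1 ≤ 4^(n+2) by omega)
          linarith
      _ = (1/2:ℝ)^(4^(n+1)) := by rw [pow_succ]; ring
  ---------------------------------------------------------------
  -- Sequence 1 : dyadic intervals, slopes tend to +infinity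
  ---------------------------------------------------------------
  have hL1 := hL (fun n => bval (mlist n)) (fun n => bval (mlist n) + (1/2)^(4^(n+1)))
    (fun n => by have := hr0 n; have := hA n; linarith)
    (fun n => by have := hr2 n; have := hA n; linarith)
    (fun n => by
      have h : (0:ℝ) < (1/2)^(4^(n+1)) := by positivity
      show bval (mlist n) < bval (mlist n) + (1/2)^(4^(n+1))
      linarith)
    (by
      show Tendsto (fun n : ℕ => (bval (mlist n) + (1/2)^(4^(n+1))) - bval (mlist n))
        atTop (𝓝 0)
      have e0 : (fun n : ℕ => (bval (mlist n) + (1/2)^(4^(n+1))) - bval (mlist n))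
          = (fun n : ℕ => ((1:ℝ)/2)^(4^(n+1))) := by funext n; ring
      rw [e0]
      apply squeeze_zero (fun n => by positivity)
        (fun n => half_pow_le (show n ≤ 4^(n+1) by have := nat_fact1 n; omega))
      exact tendsto_pow_atTop_nhds_zero_of_lt_one (by norm_num) (by norm_num))
  have e1 : (fun n : ℕ => (((takagi (bval (mlist n) + (1/2)^(4^(n+1))) - takagi (bval (mlist n)))
        / ((bval (mlist n) + (1/2)^(4^(n+1))) - bval (mlist n)) : ℝ) : EReal))
      = fun n : ℕ => ((((4:ℝ)^(n+1) - 2*(n+1) : ℝ)) : EReal) := by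
    funext n
    have hkey := takagi_dyadic_step (mlist n)
    rw [mlist_length, bslope_mlist] at hkey
    have hpos : ((1:ℝ)/2)^(4^(n+1)) ≠ 0 := by positivity
    congr 1
    rw [show (bval (mlist n) + (1/2)^(4^(n+1))) - bval (mlist n) = (1/2:ℝ)^(4^(n+1)) by ring,
      hkey]
    field_simp
    ring
  rw [e1] at hL1
  have htop : Tendsto (fun n : ℕ => ((((4:ℝ)^(n+1) - 2*(n+1) : ℝ)) : EReal)) atTop (𝓝 ⊤) := by
    rw [EReal.tendsto_nhds_top_iff_real]
    intro c
    filter_upwards [eventually_ge_atTop (⌈c⌉₊ + 1)] with n hn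
    have hc : c < (n:ℝ) := by
      have h1 := Nat.le_ceil c
      have h2 : ((⌈c⌉₊ + 1 : ℕ):ℝ) ≤ (n:ℝ) := Nat.cast_le.mpr hn
      push_cast at h2
      linarith
    have hs : (n:ℝ) ≤ (4:ℝ)^(n+1) - 2*(n+1) := by
      have h3 : ((3*n + 4 : ℕ):ℝ) ≤ ((4^(n+1) : ℕ):ℝ) := Nat.cast_le.mpr (nat_fact1 n)
      push_cast at h3
      linarith
    show ((c:ℝ) : EReal) < (((4:ℝ)^(n+1) - 2*(n+1) : ℝ) : EReal)
    exact EReal.coe_lt_coe_iff.mpr (by linarith)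
  have hLtop : L = ⊤ := tendsto_nhds_unique hL1 htop
  ---------------------------------------------------------------
  -- Sequence 2 : asymmetric intervals, slopes tend to 0
  ---------------------------------------------------------------
  have hcastl : ∀ n : ℕ, ((4^(n+1) - 2*n : ℕ) : ℝ) = (4:ℝ)^(n+1) - 2*n := by
    intro n
    have := nat_fact1 n
    rw [Nat.cast_sub (by omega)]
    push_cast
    ring
  -- T(z2 n) = T(a_n)
  have hTz2 : ∀ n, takagi (bval (mlist n) - (1/2)^(KK n)) = takagi (bval (mlist n)) := by
    intro n
    have hf := nat_fact1 n
    have hKe : KK n = 4^(n+1) + (4^(n+1) - 2*n) := rfl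
    have hb := takagi_affine_left (llist n) ((1/2)^(KK n)) (by positivity)
      (by rw [llist_length]; exact half_pow_le (by omega))
    rw [llist_length, bval_llist, bslope_llist] at hb
    have eK : (2:ℝ)^(4^(n+1)) * (1/2)^(KK n) = (1/2)^(4^(n+1) - 2*n) := helper1 _ _
    rw [eK, takagi_pow_half, hcastl] at hb
    have e3 : (1/2:ℝ)^(4^(n+1)) * (((4:ℝ)^(n+1) - 2*n) * (1/2)^(4^(n+1) - 2*n))
        = ((4:ℝ)^(n+1) - 2*n) * (1/2)^(KK n) := by
      rw [hKe, pow_add]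
      ring
    have e4 : bval (mlist n) - (1/2:ℝ)^(4^(n+1)) + (1/2)^(4^(n+1)) - (1/2)^(KK n)
        = bval (mlist n) - (1/2)^(KK n) := by ring
    have e5 : bval (mlist n) - (1/2:ℝ)^(4^(n+1)) + (1/2)^(4^(n+1)) = bval (mlist n) := by ring
    rw [e4, e5, e3] at hb
    rw [hb]
    ring
  -- the numerator expansion
  have hnum : ∀ n, takagi x - takagi (bval (mlist n)) =
      ((4:ℝ)^(n+1) - 2*(n+1)) * r n + (1/2)^(4^(n+1)) * takagi (2^(4^(n+1)) * r n) := by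
    intro n
    have hb := takagi_affine (mlist n) (r n) (hr0 n) (by rw [mlist_length]; exact hr2 n)
    rw [mlist_length, bslope_mlist] at hb
    rw [hA n, hb]
    ring
  -- nonnegativity of the slope factor
  have hfac : ∀ n : ℕ, 0 ≤ (4:ℝ)^(n+1) - 2*(n+1) := by
    intro n
    have h3 : ((3*n + 4 : ℕ):ℝ) ≤ ((4^(n+1) : ℕ):ℝ) := Nat.cast_le.mpr (nat_fact1 n)
    push_cast at h3
    linarith
  have hiter : ∀ n : ℕ, (2:ℝ)^(4^(n+1)) * r n ∈ Icc (0:ℝ) 1 := by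
    intro n
    constructor
    · have := hr0 n; positivity
    · have h1 := hr2 n
      have h2 : (2:ℝ)^(4^(n+1)) * r n ≤ 2^(4^(n+1)) * (1/2)^(4^(n+1)) := by
        have hp : (0:ℝ) < 2^(4^(n+1)) := by positivity
        nlinarith
      have h3 : (2:ℝ)^(4^(n+1)) * (1/2)^(4^(n+1)) = 1 := by
        rw [← mul_pow]; norm_num
      linarith
  have hnn : ∀ n, 0 ≤ takagi x - takagi (bval (mlist n)) := by
    intro n
    rw [hnum n]
    have t2 : 0 ≤ takagi (2^(4^(n+1)) * r n) := takagi_nonneg (hiter n)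
    have := hr0 n
    have hp : (0:ℝ) ≤ (1/2)^(4^(n+1)) := by positivity
    have := mul_nonneg (hfac n) (hr0 n)
    nlinarith
  -- upper bound for the numerator
  have hnumle : ∀ n, takagi x - takagi (bval (mlist n)) ≤ 2*(4:ℝ)^(n+2) * (1/2)^(4^(n+2)) := by
    intro n
    obtain ⟨he4, h14⟩ := pow4_facts n
    have hf := nat_fact1 n
    have hsmall : (2:ℝ)^(4^(n+1)) * r n ≤ (1/2:ℝ)^(4^(n+2) - 4^(n+1) - 1) := by
      have h1 : (2:ℝ)^(4^(n+1)) * r n ≤ 2^(4^(n+1)) * (2 * (1/2)^(4^(n+2))) := by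
        have := hrle n
        have hp : (0:ℝ) < 2^(4^(n+1)) := by positivity
        nlinarith
      have h2 : (2:ℝ)^(4^(n+1)) * (2 * (1/2)^(4^(n+2))) = 2 * (1/2)^(4^(n+2) - 4^(n+1)) := by
        rw [show (2:ℝ)^(4^(n+1)) * (2 * (1/2)^(4^(n+2)))
            = 2 * ((1/2)^(4^(n+2)) * 2^(4^(n+1))) by ring, helper2 (by omega)]
      have h3 : 2 * (1/2:ℝ)^(4^(n+2) - 4^(n+1)) = (1/2)^(4^(n+2) - 4^(n+1) - 1) := by
        have e : (1/2:ℝ)^(4^(n+2) - 4^(n+1)) = (1/2)^((4^(n+2) - 4^(n+1) - 1) + 1) := by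
          congr 1; omega
        rw [e, pow_succ]; ring
      linarith
    have hT := takagi_small_le (j := 4^(n+2) - 4^(n+1) - 1) (hiter n).1 hsmall
    have hpj : 2 * (1/2:ℝ)^(4^(n+2)) = (1/2)^(4^(n+2) - 1) := by
      have e : (1/2:ℝ)^(4^(n+2)) = (1/2)^((4^(n+2)-1)+1) := by congr 1; omega
      rw [e, pow_succ]; ring
    have hcastj : ((4^(n+2) - 4^(n+1) - 1 : ℕ) : ℝ) + 1 = 3*(4:ℝ)^(n+1) := by
      rw [Nat.cast_sub (by omega), Nat.cast_sub (by omega)]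
      push_cast
      ring
    have hterm2 : (1/2:ℝ)^(4^(n+1)) * takagi (2^(4^(n+1)) * r n)
        ≤ 3*(4:ℝ)^(n+1) * (1/2)^(4^(n+2) - 1) := by
      have hp : (0:ℝ) < (1/2)^(4^(n+1)) := by positivity
      calc (1/2:ℝ)^(4^(n+1)) * takagi (2^(4^(n+1)) * r n)
          ≤ (1/2)^(4^(n+1)) * ((((4^(n+2) - 4^(n+1) - 1 : ℕ):ℝ)+1) * (1/2)^(4^(n+2) - 4^(n+1) - 1)) := by
            nlinarith [takagi_nonneg (hiter n)]
        _ = (((4^(n+2) - 4^(n+1) - 1 : ℕ):ℝ)+1)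
              * ((1/2)^(4^(n+1)) * (1/2)^(4^(n+2) - 4^(n+1) - 1)) := by ring
        _ = 3*(4:ℝ)^(n+1) * (1/2)^(4^(n+2) - 1) := by
            rw [← pow_add, show 4^(n+1) + (4^(n+2) - 4^(n+1) - 1) = 4^(n+2) - 1 by omega, hcastj]
    have hterm1 : ((4:ℝ)^(n+1) - 2*(n+1)) * r n ≤ (4:ℝ)^(n+1) * (2*(1/2)^(4^(n+2))) := by
      apply mul_le_mul _ (hrle n) (hr0 n) (by positivity)
      have : (0:ℝ) ≤ 2*(n+1) := by positivity
      linarith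
    rw [hnum n]
    have hfour : (4:ℝ)^(n+2) = 4 * 4^(n+1) := by ring
    nlinarith [pow_pos (show (0:ℝ) < 1/2 by norm_num) (4^(n+2))]
  -- the slope of the second sequence is squeezed to 0
  have hdx : ∀ n, x - (bval (mlist n) - (1/2)^(KK n)) = r n + (1/2)^(KK n) := by
    intro n
    rw [hA n]; ring
  have hslope_nonneg : ∀ n, 0 ≤ (takagi x - takagi (bval (mlist n) - (1/2)^(KK n)))
      / (x - (bval (mlist n) - (1/2)^(KK n))) := by
    intro n
    rw [hTz2 n, hdx n]
    have := hr0 n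
    exact div_nonneg (hnn n) (by positivity)
  have hslope_ub : ∀ n, (takagi x - takagi (bval (mlist n) - (1/2)^(KK n)))
      / (x - (bval (mlist n) - (1/2)^(KK n))) ≤ (1/2:ℝ)^n := by
    intro n
    have hKe : KK n = 4^(n+1) + (4^(n+1) - 2*n) := rfl
    have hf := nat_fact1 n
    obtain ⟨he4, h14⟩ := pow4_facts n
    have hr0n := hr0 n
    have hKpos : (0:ℝ) < (1/2)^(KK n) := by positivity
    rw [hTz2 n, hdx n]
    calc (takagi x - takagi (bval (mlist n))) / (r n + (1/2)^(KK n))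
        ≤ (2*(4:ℝ)^(n+2) * (1/2)^(4^(n+2))) / (1/2)^(KK n) :=
          div_le_div₀ (by positivity) (hnumle n) hKpos (by linarith)
      _ = 2*(4:ℝ)^(n+2) * ((1/2)^(4^(n+2)) * 2^(KK n)) := by
          rw [div_eq_mul_inv, ← inv_pow]
          norm_num
          ring
      _ = 2*(4:ℝ)^(n+2) * (1/2)^(4^(n+2) - KK n) := by
          rw [helper2 (by omega)]
      _ = (2:ℝ)^(2*(n+2)+1) * (1/2)^(4^(n+2) - KK n) := by
          rw [show (4:ℝ) = 2^2 by norm_num, ← pow_mul, ← pow_succ']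
      _ = (1/2:ℝ)^(4^(n+2) - KK n - (2*(n+2)+1)) := by
          rw [mul_comm, helper2 (by omega)]
      _ ≤ (1/2:ℝ)^n := half_pow_le (by omega)
  -- apply the hypothesis to the second sequence
  have hL2 := hL (fun n => bval (mlist n) - (1/2)^(KK n)) (fun _ => x)
    (fun n => by
      have h1 : (0:ℝ) < (1/2)^(KK n) := by positivity
      have h2 := hr0 n
      have h3 := hA n
      show bval (mlist n) - (1/2)^(KK n) ≤ x
      linarith)
    (fun n => le_rfl)
    (fun n => by
      have h1 : (0:ℝ) < (1/2)^(KK n) := by positivity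
      have h2 := hr0 n
      have h3 := hA n
      show bval (mlist n) - (1/2)^(KK n) < x
      linarith)
    (by
      show Tendsto (fun n : ℕ => x - (bval (mlist n) - (1/2)^(KK n))) atTop (𝓝 0)
      apply squeeze_zero (g := fun n : ℕ => 2 * (1/2:ℝ)^n)
        (fun n => by
          rw [hdx n]
          have := hr0 n
          positivity)
        (fun n => by
          rw [hdx n]
          have hKe : KK n = 4^(n+1) + (4^(n+1) - 2*n) := rfl
          have hf := nat_fact1 n
          have h1 : r n ≤ (1/2:ℝ)^n := (hr2 n).trans (half_pow_le (by omega))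
          have h2 : (1/2:ℝ)^(KK n) ≤ (1/2:ℝ)^n := half_pow_le (by omega)
          linarith)
      have := (tendsto_pow_atTop_nhds_zero_of_lt_one
        (show (0:ℝ) ≤ 1/2 by norm_num) (show (1:ℝ)/2 < 1 by norm_num)).const_mul (2:ℝ)
      simpa using this)
  have hzero : Tendsto (fun n : ℕ => (((takagi x - takagi (bval (mlist n) - (1/2)^(KK n)))
      / (x - (bval (mlist n) - (1/2)^(KK n))) : ℝ) : EReal)) atTop (𝓝 ((0:ℝ) : EReal)) := by
    rw [EReal.tendsto_coe]
    exact squeeze_zero hslope_nonneg hslope_ub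
      (tendsto_pow_atTop_nhds_zero_of_lt_one (by norm_num) (by norm_num))
  have hL0 : L = ((0:ℝ) : EReal) := tendsto_nhds_unique hL2 hzero
  rw [hLtop] at hL0
  simp at hL0
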